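/- For the enhanced conflict graph G_{K,N} of a K×N switch with unicasts and broadcasts only, the imperfection ratio satisfies imp(G_{K,N}) ≤ (2K-1)/K. -/

import Mathlib

open Pointwise

/-- Vertices of the enhanced conflict graph of a `K × N` switch loaded with all
unicasts and one broadcast per input: `u i j` is the unicast subflow from input
`i` to output `j`, and `b i j` is the broadcast subflow from input `i` to
output `j`. -/
inductive SwitchVertex (K N : ℕ) where
  | u : Fin K → Fin N → SwitchVertex K N
  | b : Fin K → Fin N → SwitchVertex K N
deriving DecidableEq

namespace SwitchVertex

variable {K N : ℕ}

/-- The input of a subflow. -/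
def inp : SwitchVertex K N → Fin K
  | u i _ => i
  | b i _ => i

/-- The output of a subflow. -/
def out : SwitchVertex K N → Fin N
  | u _ j => j
  | b _ j => j

/-- Whether a subflow is a broadcast subflow. -/
def isBroadcast : SwitchVertex K N → Prop
  | u _ _ => False
  | b _ _ => True

end SwitchVertex

/-- The enhanced conflict graph `G_{K,N}`: two distinct subflows conflict iff they
share the output, or they share the input and are not both broadcast subflows
(broadcast subflows from the same input belong to the same flow, hence do not
conflict). -/
def GKN (K N : ℕ) : SimpleGraph (SwitchVertex K N) where
  Adj a b := a ≠ b ∧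
    (a.out = b.out ∨ (a.inp = b.inp ∧ ¬ (a.isBroadcast ∧ b.isBroadcast)))
  symm := by
    constructor
    rintro a b ⟨hne, h | ⟨h1, h2⟩⟩
    · exact ⟨hne.symm, Or.inl h.symm⟩
    · exact ⟨hne.symm, Or.inr ⟨h1.symm, fun hh => h2 ⟨hh.2, hh.1⟩⟩⟩
  loopless := by constructor; rintro a ⟨hne, _⟩; exact hne rfl

/-- A graph is perfect if for every induced subgraph the chromatic number equals
the clique number. -/
def SimpleGraph.IsPerfect {V : Type*} (G : SimpleGraph V) : Prop :=
  ∀ s : Set V, (G.induce s).chromaticNumber = ((G.induce s).cliqueNum : ℕ∞)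

open Pointwise


/-- The stable set polytope `STAB(G)`: the convex hull of the incidence vectors
of stable sets of `G`. -/
def stabPolytope {V : Type*} (G : SimpleGraph V) : Set (V → ℝ) :=
  convexHull ℝ {x | ∃ s : Finset V,
    (∀ u ∈ s, ∀ w ∈ s, ¬ G.Adj u w) ∧ x = Set.indicator (↑s) (fun _ => (1 : ℝ))}

/-- The fractional stable set polytope `QSTAB(G)`: nonnegativity together with
the clique inequalities. -/
def qstab {V : Type*} (G : SimpleGraph V) : Set (V → ℝ) :=
  {x | (∀ v, 0 ≤ x v) ∧
    ∀ Q : Finset V, (∀ u ∈ Q, ∀ w ∈ Q, u ≠ w → G.Adj u w) → ∑ v ∈ Q, x v ≤ 1}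

/-- The imperfection ratio `imp(G) = min { t : QSTAB(G) ⊆ t · STAB(G) }`. -/
noncomputable def impRatio {V : Type*} (G : SimpleGraph V) : ℝ :=
  sInf {t : ℝ | qstab G ⊆ t • stabPolytope G}

namespace SwitchAux

open Set MeasureTheory


/-- Disjointness of half-open intervals. -/
lemma dIco {a b c d : ℝ} (h : b ≤ c) : Disjoint (Ico a b) (Ico c d) := by
  rw [Set.Ico_disjoint_Ico]
  exact le_trans (min_le_left _ _) (h.trans (le_max_right _ _))

/-- A union of at most three intervals, realizing a set of measure `β - α`
inside `[0,1) \ ([c1, c1+a) ∪ [c2+a, c2+a+d))`. -/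
def pieceSet (c1 c2 a d α β : ℝ) : Set ℝ :=
  Ico (min α c1) (min β c1) ∪
  Ico (max (min α c2) c1 + a) (max (min β c2) c1 + a) ∪
  Ico (max α c2 + (a + d)) (max β c2 + (a + d))

lemma pieceSet_measurable (c1 c2 a d α β : ℝ) : MeasurableSet (pieceSet c1 c2 a d α β) :=
  (((measurableSet_Ico).union measurableSet_Ico).union measurableSet_Ico)

lemma clamp_identity {c1 c2 : ℝ} (h : c1 ≤ c2) (t : ℝ) :
    min t c1 + (max (min t c2) c1 + max t c2) = t + (c1 + c2) := by
  rcases le_total t c1 with h1 | h1 <;> rcases le_total t c2 with h2 | h2 <;>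
    simp [min_def, max_def] <;> split_ifs <;> linarith

lemma pieceSet_volume {c1 c2 a d α β : ℝ} (h12 : c1 ≤ c2) (hαβ : α ≤ β)
    (ha : 0 ≤ a) (hd : 0 ≤ d) :
    volume (pieceSet c1 c2 a d α β) = ENNReal.ofReal (β - α) := by
  have d13 : Disjoint (Ico (min α c1) (min β c1) ∪
      Ico (max (min α c2) c1 + a) (max (min β c2) c1 + a))
      (Ico (max α c2 + (a + d)) (max β c2 + (a + d))) := by
    refine Set.disjoint_union_left.2 ⟨dIco ?_, dIco ?_⟩
    · have h1 : min β c1 ≤ c1 := min_le_right _ _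
      have h2 : c2 ≤ max α c2 := le_max_right _ _
      linarith
    · have h1 : max (min β c2) c1 ≤ c2 := max_le (min_le_right _ _) h12
      have h2 : c2 ≤ max α c2 := le_max_right _ _
      linarith
  have d12 : Disjoint (Ico (min α c1) (min β c1))
      (Ico (max (min α c2) c1 + a) (max (min β c2) c1 + a)) := by
    refine dIco ?_
    have h1 : min β c1 ≤ c1 := min_le_right _ _
    have h2 : c1 ≤ max (min α c2) c1 := le_max_right _ _
    linarith
  rw [pieceSet, measure_union d13 measurableSet_Ico, measure_union d12 measurableSet_Ico,
    Real.volume_Ico, Real.volume_Ico, Real.volume_Ico]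
  have l1 : 0 ≤ min β c1 - min α c1 := by
    have := min_le_min hαβ (le_refl c1); linarith
  have l2 : 0 ≤ max (min β c2) c1 + a - (max (min α c2) c1 + a) := by
    have := max_le_max (min_le_min hαβ (le_refl c2)) (le_refl c1); linarith
  have l3 : 0 ≤ max β c2 + (a + d) - (max α c2 + (a + d)) := by
    have := max_le_max hαβ (le_refl c2); linarith
  rw [← ENNReal.ofReal_add l1 l2, ← ENNReal.ofReal_add (by linarith) l3]
  congr 1
  have hα := clamp_identity h12 α
  have hβ := clamp_identity h12 β
  linarith

/-- The piece set is disjoint from the "middle" blocked interval `[c1, c1+a)`. -/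
lemma pieceSet_disjoint_mid {c1 c2 a d α β : ℝ} (h12 : c1 ≤ c2) (hd : 0 ≤ d) :
    Disjoint (pieceSet c1 c2 a d α β) (Ico c1 (c1 + a)) := by
  refine Set.disjoint_union_left.2 ⟨Set.disjoint_union_left.2 ⟨dIco (min_le_right _ _), ?_⟩, ?_⟩
  · exact (dIco (by have := le_max_right (min α c2) c1; linarith)).symm
  · refine (dIco ?_).symm
    have := le_max_right α c2; linarith

/-- The piece set is disjoint from the "top" blocked interval `[c2+a, c2+a+d)`. -/
lemma pieceSet_disjoint_top {c1 c2 a d α β : ℝ} (h12 : c1 ≤ c2) (ha : 0 ≤ a) :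
    Disjoint (pieceSet c1 c2 a d α β) (Ico (c2 + a) (c2 + a + d)) := by
  refine Set.disjoint_union_left.2 ⟨Set.disjoint_union_left.2 ⟨dIco ?_, dIco ?_⟩, ?_⟩
  · have := min_le_right β c1; linarith
  · have := max_le (min_le_right β c2) h12; linarith
  · refine (dIco ?_).symm
    have := le_max_right α c2; linarith

/-- Two piece sets with `β ≤ α'` are disjoint. -/
lemma pieceSet_disjoint_pieceSet {c1 c2 a d α β α' β' : ℝ} (h12 : c1 ≤ c2)
    (ha : 0 ≤ a) (hd : 0 ≤ d) (h : β ≤ α') :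
    Disjoint (pieceSet c1 c2 a d α β) (pieceSet c1 c2 a d α' β') := by
  have m1 : min β c1 ≤ min α' c1 := min_le_min h le_rfl
  have m2 : max (min β c2) c1 ≤ max (min α' c2) c1 :=
    max_le_max (min_le_min h le_rfl) le_rfl
  have m3 : max β c2 ≤ max α' c2 := max_le_max h le_rfl
  have u1 : min β c1 ≤ c1 := min_le_right _ _
  have u1' : min β' c1 ≤ c1 := min_le_right _ _
  have u2 : max (min β c2) c1 ≤ c2 := max_le (min_le_right _ _) h12
  have u2' : max (min β' c2) c1 ≤ c2 := max_le (min_le_right _ _) h12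
  have l2 : c1 ≤ max (min α c2) c1 := le_max_right _ _
  have l2' : c1 ≤ max (min α' c2) c1 := le_max_right _ _
  have l3 : c2 ≤ max α c2 := le_max_right _ _
  have l3' : c2 ≤ max α' c2 := le_max_right _ _
  refine Set.disjoint_union_left.2 ⟨Set.disjoint_union_left.2 ⟨?_, ?_⟩, ?_⟩ <;>
    refine Set.disjoint_union_right.2 ⟨Set.disjoint_union_right.2 ⟨?_, ?_⟩, ?_⟩
  · exact dIco m1
  · exact dIco (by linarith)
  · exact dIco (by linarith)
  · exact (dIco (by linarith)).symm
  · exact dIco (by linarith)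
  · exact dIco (by linarith)
  · exact (dIco (by linarith)).symm
  · exact (dIco (by linarith)).symm
  · exact dIco (by linarith)

/-- The piece set lands in `[0, c3 + (a+d))` provided `β ≤ c3`, etc. -/
lemma pieceSet_subset {c1 c2 c3 a d α β : ℝ} (h01 : 0 ≤ c1) (h12 : c1 ≤ c2) (h23 : c2 ≤ c3)
    (hα : 0 ≤ α) (ha : 0 ≤ a) (hd : 0 ≤ d) (hβ : β ≤ c3) :
    pieceSet c1 c2 a d α β ⊆ Ico 0 (c3 + (a + d)) := by
  refine Set.union_subset (Set.union_subset ?_ ?_) ?_ <;> refine Set.Ico_subset_Ico ?_ ?_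
  · exact le_min hα h01
  · have := min_le_right β c1; linarith
  · have := le_max_right (min α c2) c1; linarith
  · have := max_le (min_le_right β c2) h12; linarith
  · have h := le_max_left α c2; linarith
  · have := max_le hβ h23; linarith

variable {V : Type*} [Fintype V] [DecidableEq V]

lemma stab_gen_finite (G : SimpleGraph V) :
    ({x | ∃ s : Finset V, (∀ u ∈ s, ∀ w ∈ s, ¬ G.Adj u w) ∧
      x = Set.indicator (↑s) (fun _ => (1 : ℝ))} : Set (V → ℝ)).Finite := by
  apply Set.Finite.subset
    (Set.finite_range (fun s : Finset V => Set.indicator (↑s) (fun _ => (1 : ℝ))))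
  rintro x ⟨s, -, rfl⟩
  exact ⟨s, rfl⟩

lemma isClosed_stabPolytope (G : SimpleGraph V) : IsClosed (stabPolytope G) :=
  ((stab_gen_finite G).isCompact_convexHull ℝ).isClosed

/-- If we can realize `z` by an assignment of measurable subsets of `[0,1)` to
vertices such that adjacent vertices get disjoint sets, then `z` lies in the
stable set polytope. -/
lemma mem_stabPolytope_of_sets (G : SimpleGraph V) (z : V → ℝ) (E : V → Set ℝ)
    (hmeas : ∀ v, MeasurableSet (E v))
    (hsub : ∀ v, E v ⊆ Set.Ico (0:ℝ) 1)
    (hdisj : ∀ v w, G.Adj v w → Disjoint (E v) (E w))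
    (hvol : ∀ v, volume (E v) = ENNReal.ofReal (z v))
    (hz : ∀ v, 0 ≤ z v) :
    z ∈ stabPolytope G := by
  classical
  set μ := volume.restrict (Set.Ico (0:ℝ) 1) with hμ
  have : IsProbabilityMeasure μ := by
    constructor
    rw [hμ, Measure.restrict_apply_univ, Real.volume_Ico]
    norm_num
  set f : ℝ → V → ℝ := fun θ v => (E v).indicator (fun _ => (1:ℝ)) θ with hf
  have hfeq : ∀ θ, f θ = ∑ v : V, ((E v).indicator (fun _ => (1:ℝ)) θ) • (Pi.single v 1 : V → ℝ) := by
    intro θ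
    funext w
    simp only [Finset.sum_apply, Pi.smul_apply, Pi.single_apply, smul_eq_mul, mul_ite,
      mul_one, mul_zero]
    rw [Finset.sum_ite_eq Finset.univ w (fun v => (E v).indicator (fun _ => (1:ℝ)) θ)]
    simp [hf]
  have hint : Integrable f μ := by
    rw [funext hfeq]
    refine integrable_finset_sum _ (fun v _ => ?_)
    exact ((integrable_const (1:ℝ)).indicator (hmeas v)).smul_const _
  have hmem : ∀ θ, f θ ∈ stabPolytope G := by
    intro θ
    refine subset_convexHull ℝ _ ?_
    refine ⟨Finset.univ.filter (fun v => θ ∈ E v), fun v hv w hw hadj => ?_, ?_⟩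
    · rw [Finset.mem_filter] at hv hw
      exact Set.disjoint_iff.1 (hdisj v w hadj) ⟨hv.2, hw.2⟩
    · funext v
      by_cases h : θ ∈ E v <;> simp [hf, Set.indicator_apply, h]
  have key : (∫ θ, f θ ∂μ) ∈ stabPolytope G :=
    (convex_convexHull ℝ _).integral_mem (isClosed_stabPolytope G)
      (Filter.Eventually.of_forall hmem) hint
  have hcompute : (∫ θ, f θ ∂μ) = z := by
    rw [funext hfeq, integral_finset_sum _ (fun v _ =>
      ((integrable_const (1:ℝ)).indicator (hmeas v)).smul_const _)]
    funext w
    have hterm : ∀ v : V,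
        (∫ θ, ((E v).indicator (fun _ => (1:ℝ)) θ) • (Pi.single v 1 : V → ℝ) ∂μ)
          = z v • (Pi.single v 1 : V → ℝ) := by
      intro v
      rw [integral_smul_const, integral_indicator_const (1:ℝ) (hmeas v)]
      have : μ (E v) = ENNReal.ofReal (z v) := by
        rw [hμ, Measure.restrict_apply (hmeas v),
          Set.inter_eq_self_of_subset_left (hsub v), hvol v]
      rw [measureReal_def, this, smul_eq_mul, mul_one, ENNReal.toReal_ofReal (hz v)]
    rw [Finset.sum_congr rfl (fun v _ => hterm v)]
    simp only [Finset.sum_apply, Pi.smul_apply, Pi.single_apply, smul_eq_mul, mul_ite,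
      mul_one, mul_zero]
    rw [Finset.sum_ite_eq Finset.univ w z]
    simp
  rwa [hcompute] at key

open SwitchVertex

def switchEquiv (K N : ℕ) : (Fin K × Fin N) ⊕ (Fin K × Fin N) ≃ SwitchVertex K N where
  toFun p := match p with
    | Sum.inl (i, j) => .u i j
    | Sum.inr (i, j) => .b i j
  invFun v := match v with
    | .u i j => Sum.inl (i, j)
    | .b i j => Sum.inr (i, j)
  left_inv := by rintro (⟨i, j⟩ | ⟨i, j⟩) <;> rfl
  right_inv := by rintro (v | v) <;> rfl

instance (K N : ℕ) : Fintype (SwitchVertex K N) :=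
  Fintype.ofEquiv _ (switchEquiv K N)

variable {K N : ℕ}

def eU (i : Fin K) : Fin N ↪ SwitchVertex K N :=
  ⟨fun j => .u i j, fun a b h => by injection h⟩
def eUc (j : Fin N) : Fin K ↪ SwitchVertex K N :=
  ⟨fun i => .u i j, fun a b h => by injection h⟩
def eB (j : Fin N) : Fin K ↪ SwitchVertex K N :=
  ⟨fun i => .b i j, fun a b h => by injection h⟩

lemma rowu {x : SwitchVertex K N → ℝ} (hx : x ∈ qstab (GKN K N)) (i : Fin K) :
    ∑ j, x (.u i j) ≤ 1 := by
  have h := hx.2 (Finset.univ.map (eU i)) ?_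
  · rwa [Finset.sum_map] at h
  · rintro v hv w hw hne
    rw [Finset.mem_map] at hv hw
    obtain ⟨j1, -, rfl⟩ := hv
    obtain ⟨j2, -, rfl⟩ := hw
    exact ⟨hne, Or.inr ⟨rfl, fun h => (h.1 : False).elim⟩⟩

lemma rowb {x : SwitchVertex K N → ℝ} (hx : x ∈ qstab (GKN K N)) (i : Fin K) (j0 : Fin N) :
    (∑ j, x (.u i j)) + x (.b i j0) ≤ 1 := by
  have hmem : (SwitchVertex.b i j0 : SwitchVertex K N) ∉ Finset.univ.map (eU i) := by
    rw [Finset.mem_map]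
    rintro ⟨j, -, h⟩
    simp [eU] at h
  have h := hx.2 (insert (.b i j0) (Finset.univ.map (eU i))) ?_
  · rw [Finset.sum_insert hmem, Finset.sum_map] at h
    unfold eU at h
    change x (.b i j0) + ∑ j, x (.u i j) ≤ 1 at h
    linarith
  · rintro v hv w hw hne
    rw [Finset.mem_insert, Finset.mem_map] at hv hw
    have hadj : ∀ (p q : SwitchVertex K N), p.inp = q.inp → ¬ (p.isBroadcast ∧ q.isBroadcast) →
        p ≠ q → (GKN K N).Adj p q := fun p q h1 h2 hne => ⟨hne, Or.inr ⟨h1, h2⟩⟩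
    rcases hv with rfl | ⟨j1, -, rfl⟩ <;> rcases hw with rfl | ⟨j2, -, rfl⟩
    · exact absurd rfl hne
    · exact hadj _ _ rfl (fun h => (h.2 : False).elim) hne
    · exact hadj _ _ rfl (fun h => (h.1 : False).elim) hne
    · exact hadj _ _ rfl (fun h => (h.1 : False).elim) hne

lemma colu {x : SwitchVertex K N → ℝ} (hx : x ∈ qstab (GKN K N)) (j : Fin N) :
    ∑ i, x (.u i j) ≤ 1 := by
  have h := hx.2 (Finset.univ.map (eUc j)) ?_
  · rwa [Finset.sum_map] at h
  · rintro v hv w hw hne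
    rw [Finset.mem_map] at hv hw
    obtain ⟨i1, -, rfl⟩ := hv
    obtain ⟨i2, -, rfl⟩ := hw
    exact ⟨hne, Or.inl rfl⟩

lemma colb {x : SwitchVertex K N → ℝ} (hx : x ∈ qstab (GKN K N)) (i0 : Fin K) (j : Fin N) :
    x (.u i0 j) + ∑ i, x (.b i j) ≤ 1 := by
  have hmem : (SwitchVertex.u i0 j : SwitchVertex K N) ∉ Finset.univ.map (eB j) := by
    rw [Finset.mem_map]
    rintro ⟨i, -, h⟩
    simp [eB] at h
  have h := hx.2 (insert (.u i0 j) (Finset.univ.map (eB j))) ?_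
  · rw [Finset.sum_insert hmem, Finset.sum_map] at h
    unfold eB at h
    change x (.u i0 j) + ∑ i, x (.b i j) ≤ 1 at h
    linarith
  · rintro v hv w hw hne
    rw [Finset.mem_insert, Finset.mem_map] at hv hw
    have hout : ∀ (p q : SwitchVertex K N), p.out = q.out → p ≠ q → (GKN K N).Adj p q :=
      fun p q h1 hne => ⟨hne, Or.inl h1⟩
    rcases hv with rfl | ⟨i1, -, rfl⟩ <;> rcases hw with rfl | ⟨i2, -, rfl⟩
    · exact absurd rfl hne
    · exact hout _ _ rfl hne
    · exact hout _ _ rfl hne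
    · exact hout _ _ rfl hne


section Unicast
open Finset Matrix

/-- The linear map extracting the unicast block of a padded matrix. -/
def phiU (K N : ℕ) :
    Matrix (Fin K ⊕ Fin N) (Fin K ⊕ Fin N) ℝ →ₗ[ℝ] (SwitchVertex K N → ℝ) where
  toFun M := fun v => match v with
    | .u i j => M (Sum.inl i) (Sum.inr j)
    | .b _ _ => 0
  map_add' M M' := by
    funext v
    cases v <;> simp [Matrix.add_apply]
  map_smul' r M := by
    funext v
    cases v <;> simp [Matrix.smul_apply]

lemma unicast_mem {K N : ℕ} {x : SwitchVertex K N → ℝ} (hx : x ∈ qstab (GKN K N)) :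
    (fun v : SwitchVertex K N => match v with
      | .u i j => x (.u i j)
      | .b _ _ => 0) ∈ stabPolytope (GKN K N) := by
  classical
  set M : Matrix (Fin K ⊕ Fin N) (Fin K ⊕ Fin N) ℝ := fun p q =>
    match p, q with
    | Sum.inl i, Sum.inl i' => if i = i' then 1 - ∑ j, x (.u i j) else 0
    | Sum.inl i, Sum.inr j => x (.u i j)
    | Sum.inr j, Sum.inl i => x (.u i j)
    | Sum.inr j, Sum.inr j' => if j = j' then 1 - ∑ i, x (.u i j) else 0
    with hMdef
  have hM : M ∈ doublyStochastic ℝ (Fin K ⊕ Fin N) := by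
    rw [mem_doublyStochastic_iff_sum]
    refine ⟨?_, ?_, ?_⟩
    · rintro (i | j) (i' | j')
      · show (0:ℝ) ≤ if i = i' then 1 - ∑ j, x (.u i j) else 0
        split_ifs with h
        · linarith [rowu hx i]
        · exact le_rfl
      · exact hx.1 _
      · exact hx.1 _
      · show (0:ℝ) ≤ if j = j' then 1 - ∑ i, x (.u i j) else 0
        split_ifs with h
        · linarith [colu hx j]
        · exact le_rfl
    · rintro (i | j)
      · rw [Fintype.sum_sum_type]
        show (∑ i' : Fin K, if i = i' then 1 - ∑ j, x (.u i j) else 0)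
            + (∑ j : Fin N, x (.u i j)) = 1
        rw [Finset.sum_ite_eq Finset.univ i (fun _ => 1 - ∑ j, x (.u i j))]
        simp
      · rw [Fintype.sum_sum_type]
        show (∑ i : Fin K, x (.u i j))
            + (∑ j' : Fin N, if j = j' then 1 - ∑ i, x (.u i j) else 0) = 1
        rw [Finset.sum_ite_eq Finset.univ j (fun _ => 1 - ∑ i, x (.u i j))]
        simp
    · rintro (i | j)
      · rw [Fintype.sum_sum_type]
        show (∑ i' : Fin K, if i' = i then 1 - ∑ j, x (.u i' j) else 0)
            + (∑ j : Fin N, x (.u i j)) = 1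
        rw [Finset.sum_ite_eq' Finset.univ i (fun i' => 1 - ∑ j, x (.u i' j))]
        simp
      · rw [Fintype.sum_sum_type]
        show (∑ i : Fin K, x (.u i j))
            + (∑ j' : Fin N, if j' = j then 1 - ∑ i, x (.u i j') else 0) = 1
        rw [Finset.sum_ite_eq' Finset.univ j (fun j' => 1 - ∑ i, x (.u i j'))]
        simp
  have hconv : M ∈ convexHull ℝ {P : Matrix (Fin K ⊕ Fin N) (Fin K ⊕ Fin N) ℝ |
      ∃ σ : Equiv.Perm (Fin K ⊕ Fin N), σ.permMatrix ℝ = P} := by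
    rw [← doublyStochastic_eq_convexHull_permMatrix]
    exact hM
  have himg := Set.mem_image_of_mem (phiU K N) hconv
  rw [LinearMap.image_convexHull] at himg
  have hsubset : (phiU K N) '' {P : Matrix (Fin K ⊕ Fin N) (Fin K ⊕ Fin N) ℝ |
      ∃ σ : Equiv.Perm (Fin K ⊕ Fin N), σ.permMatrix ℝ = P} ⊆
      {y : SwitchVertex K N → ℝ | ∃ s : Finset (SwitchVertex K N),
        (∀ u ∈ s, ∀ w ∈ s, ¬ (GKN K N).Adj u w) ∧
        y = Set.indicator (↑s) (fun _ => (1 : ℝ))} := by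
    rintro y ⟨P, ⟨σ, rfl⟩, rfl⟩
    refine ⟨Finset.univ.filter (fun v : SwitchVertex K N => match v with
      | .u i j => σ (Sum.inl i) = Sum.inr j
      | .b _ _ => False), ?_, ?_⟩
    · rintro v hv w hw hadj
      rw [Finset.mem_filter] at hv hw
      obtain ⟨-, hv2⟩ := hv
      obtain ⟨-, hw2⟩ := hw
      obtain ⟨hne, hor⟩ := hadj
      cases v with
      | b i1 j1 => exact hv2
      | u i1 j1 =>
        cases w with
        | b i2 j2 => exact hw2
        | u i2 j2 =>
          have hv2' : σ (Sum.inl i1) = Sum.inr j1 := hv2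
          have hw2' : σ (Sum.inl i2) = Sum.inr j2 := hw2
          rcases hor with hout | ⟨hinp, -⟩
          · have hj : j1 = j2 := hout
            subst hj
            have : Sum.inl i1 = Sum.inl i2 := σ.injective (hv2'.trans hw2'.symm)
            simp only [Sum.inl.injEq] at this
            exact hne (by rw [this])
          · have hi : i1 = i2 := hinp
            subst hi
            rw [hv2'] at hw2'
            simp only [Sum.inr.injEq] at hw2'
            exact hne (by rw [hw2'])
    · funext v
      match v with
      | .u i j =>
        show (σ.permMatrix ℝ) (Sum.inl i) (Sum.inr j) = _
        by_cases h : σ (Sum.inl i) = Sum.inr j <;>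
          simp [Equiv.Perm.permMatrix, PEquiv.toMatrix_apply, Equiv.toPEquiv_apply,
            Set.indicator_apply, h]
      | .b i j =>
        show (0:ℝ) = _
        simp [Set.indicator_apply]
  exact convexHull_mono hsubset himg

end Unicast

section Broadcast

open Set MeasureTheory

lemma broadcast_mem {K N : ℕ} {x : SwitchVertex K N → ℝ} (hx : x ∈ qstab (GKN K N))
    (i : Fin K) :
    (fun v : SwitchVertex K N => match v with
      | .u i' j => if i' = i then x (.u i' j) else 0
      | .b i' j => x (.b i' j)) ∈ stabPolytope (GKN K N) := by
  classical
  set a' : ℕ → ℝ := fun m => if h : m < N then x (.u i ⟨m, h⟩) else 0 with ha'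
  set s : ℕ → ℝ := fun m => ∑ k ∈ Finset.range m, a' k with hs
  set alf : Fin K → Fin N → ℝ := fun i' j =>
    ∑ i'' ∈ Finset.univ.filter (fun i'' => i'' < i' ∧ i'' ≠ i), x (.b i'' j) with half
  have ha'nonneg : ∀ m, 0 ≤ a' m := by
    intro m
    simp only [ha']
    split
    · exact hx.1 _
    · exact le_rfl
  have hs0 : ∀ m, 0 ≤ s m := fun m => Finset.sum_nonneg (fun k _ => ha'nonneg k)
  have hsmono : ∀ {m m' : ℕ}, m ≤ m' → s m ≤ s m' := by
    intro m m' h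
    exact Finset.sum_le_sum_of_subset_of_nonneg (Finset.range_subset_range.2 h)
      (fun k _ _ => ha'nonneg k)
  have hstep : ∀ j : Fin N, s ((j : ℕ) + 1) = s (j : ℕ) + x (.u i j) := by
    intro j
    simp only [hs]
    rw [Finset.sum_range_succ]
    congr 1
    simp only [ha']
    rw [dif_pos j.isLt]
  have hAeq : s N = ∑ j, x (.u i j) := by
    simp only [hs]
    rw [← Fin.sum_univ_eq_sum_range]
    refine Finset.sum_congr rfl fun j _ => ?_
    simp only [ha']
    rw [dif_pos j.isLt]
  have hsA : ∀ j : Fin N, s (j : ℕ) + x (.u i j) ≤ s N :=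
    fun j => (hstep j) ▸ hsmono j.isLt
  have hrowA : ∀ j : Fin N, s N + x (.b i j) ≤ 1 := by
    intro j
    rw [hAeq]
    exact rowb hx i j
  have half0 : ∀ i' j, 0 ≤ alf i' j :=
    fun i' j => Finset.sum_nonneg (fun k _ => hx.1 _)
  have hkey : ∀ (i' : Fin K) (j : Fin N), i' ≠ i →
      alf i' j + x (.b i' j) ≤ 1 - x (.u i j) - x (.b i j) := by
    intro i' j hi'
    have hnotmem : i' ∉ Finset.univ.filter (fun i'' => i'' < i' ∧ i'' ≠ i) := by
      simp
    have hins : alf i' j + x (.b i' j)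
        = ∑ i'' ∈ insert i' (Finset.univ.filter (fun i'' => i'' < i' ∧ i'' ≠ i)),
            x (.b i'' j) := by
      rw [Finset.sum_insert hnotmem, half]
      ring
    have hsub : insert i' (Finset.univ.filter (fun i'' => i'' < i' ∧ i'' ≠ i))
        ⊆ Finset.univ.erase i := by
      intro k hk
      rcases Finset.mem_insert.1 hk with rfl | hk
      · exact Finset.mem_erase.2 ⟨hi', Finset.mem_univ _⟩
      · rw [Finset.mem_filter] at hk
        exact Finset.mem_erase.2 ⟨hk.2.2, Finset.mem_univ _⟩
    have h1 : alf i' j + x (.b i' j) ≤ ∑ i'' ∈ Finset.univ.erase i, x (.b i'' j) := by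
      rw [hins]
      exact Finset.sum_le_sum_of_subset_of_nonneg hsub (fun k _ _ => hx.1 _)
    have h2 : ∑ i'' ∈ Finset.univ.erase i, x (.b i'' j) + x (.b i j)
        = ∑ i'', x (.b i'' j) := Finset.sum_erase_add _ _ (Finset.mem_univ i)
    have h3 := colb hx i j
    linarith
  have hamono : ∀ (i1 i2 : Fin K) (j : Fin N), i1 < i2 → i1 ≠ i →
      alf i1 j + x (.b i1 j) ≤ alf i2 j := by
    intro i1 i2 j h12' hi1
    have hnotmem : i1 ∉ Finset.univ.filter (fun i'' => i'' < i1 ∧ i'' ≠ i) := by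
      simp
    have hins : alf i1 j + x (.b i1 j)
        = ∑ i'' ∈ insert i1 (Finset.univ.filter (fun i'' => i'' < i1 ∧ i'' ≠ i)),
            x (.b i'' j) := by
      rw [Finset.sum_insert hnotmem, half]
      ring
    have hsub : insert i1 (Finset.univ.filter (fun i'' => i'' < i1 ∧ i'' ≠ i))
        ⊆ Finset.univ.filter (fun i'' => i'' < i2 ∧ i'' ≠ i) := by
      intro k hk
      rcases Finset.mem_insert.1 hk with rfl | hk
      · exact Finset.mem_filter.2 ⟨Finset.mem_univ _, h12', hi1⟩
      · rw [Finset.mem_filter] at hk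
        exact Finset.mem_filter.2 ⟨Finset.mem_univ _, hk.2.1.trans h12', hk.2.2⟩
    rw [hins, half]
    exact Finset.sum_le_sum_of_subset_of_nonneg hsub (fun k _ _ => hx.1 _)
  set E : SwitchVertex K N → Set ℝ := fun v => match v with
    | .u i' j => if i' = i then Set.Ico (s (j : ℕ)) (s (j : ℕ) + x (.u i j)) else ∅
    | .b i' j => if i' = i then Set.Ico (s N) (s N + x (.b i j)) else
        pieceSet (s (j : ℕ)) (s N - x (.u i j)) (x (.u i j)) (x (.b i j))
          (alf i' j) (alf i' j + x (.b i' j)) with hE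
  have hEu : ∀ (j : Fin N), E (.u i j) = Set.Ico (s (j : ℕ)) (s (j : ℕ) + x (.u i j)) := by
    intro j
    rw [hE]
    simp
  have hEu' : ∀ (i' : Fin K) (j : Fin N), i' ≠ i → E (.u i' j) = ∅ := by
    intro i' j h
    rw [hE]
    simp [h]
  have hEb : ∀ (j : Fin N), E (.b i j) = Set.Ico (s N) (s N + x (.b i j)) := by
    intro j
    rw [hE]
    simp
  have hEb' : ∀ (i' : Fin K) (j : Fin N), i' ≠ i → E (.b i' j) =
      pieceSet (s (j : ℕ)) (s N - x (.u i j)) (x (.u i j)) (x (.b i j))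
        (alf i' j) (alf i' j + x (.b i' j)) := by
    intro i' j h
    rw [hE]
    simp [h]
  have h12 : ∀ j : Fin N, s (j : ℕ) ≤ s N - x (.u i j) := by
    intro j
    have := hsA j
    linarith
  have h23 : ∀ j : Fin N, s N - x (.u i j) ≤ 1 - x (.u i j) - x (.b i j) := by
    intro j
    have := hrowA j
    linarith
  refine mem_stabPolytope_of_sets (GKN K N) _ E ?_ ?_ ?_ ?_ ?_
  · -- measurability
    rintro (⟨i', j⟩ | ⟨i', j⟩)
    · by_cases h : i' = i
      · rw [h, hEu j]
        exact measurableSet_Ico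
      · rw [hEu' i' j h]
        exact MeasurableSet.empty
    · by_cases h : i' = i
      · rw [h, hEb j]
        exact measurableSet_Ico
      · rw [hEb' i' j h]
        exact pieceSet_measurable _ _ _ _ _ _
  · -- subset of [0,1)
    rintro (⟨i', j⟩ | ⟨i', j⟩)
    · by_cases h : i' = i
      · rw [h, hEu j]
        refine Set.Ico_subset_Ico (hs0 _) ?_
        have h1 := hsA j
        have h2 := hrowA j
        have h3 := hx.1 (SwitchVertex.b i j)
        linarith
      · rw [hEu' i' j h]
        exact Set.empty_subset _
    · by_cases h : i' = i
      · rw [h, hEb j]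
        exact Set.Ico_subset_Ico (hs0 _) (hrowA j)
      · rw [hEb' i' j h]
        have hsub := pieceSet_subset (hs0 (j : ℕ)) (h12 j) (h23 j) (half0 i' j)
          (hx.1 (SwitchVertex.u i j)) (hx.1 (SwitchVertex.b i j)) (hkey i' j h)
        rwa [show (1 - x (.u i j) - x (.b i j)) + (x (.u i j) + x (.b i j)) = 1 by ring]
          at hsub
  · -- disjointness
    have hUB : ∀ (i1 : Fin K) (j1 : Fin N) (i2 : Fin K) (j2 : Fin N),
        (GKN K N).Adj (.u i1 j1) (.b i2 j2) →
        Disjoint (E (.u i1 j1)) (E (.b i2 j2)) := by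
      intro i1 j1 i2 j2 hadj
      by_cases h1 : i1 = i
      · subst h1
        rw [hEu j1]
        by_cases h2 : i2 = i1
        · rw [h2, hEb j2]
          exact dIco (hsA j1)
        · have hj : j1 = j2 := by
            rcases hadj.2 with hout | ⟨hinp, -⟩
            · exact hout
            · exact absurd (hinp : i1 = i2).symm h2
          subst hj
          rw [hEb' i2 j1 h2]
          exact (pieceSet_disjoint_mid (h12 j1) (hx.1 (SwitchVertex.b i1 j1))).symm
      · rw [hEu' i1 j1 h1]
        exact Set.empty_disjoint _
    rintro (⟨i1, j1⟩ | ⟨i1, j1⟩) (⟨i2, j2⟩ | ⟨i2, j2⟩) hadj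
    · -- u-u
      by_cases h1 : i1 = i
      · subst h1
        by_cases h2 : i2 = i1
        · subst h2
          rw [hEu j1, hEu j2]
          have hjne : j1 ≠ j2 := by
            intro h
            exact hadj.1 (by rw [h])
          rcases lt_or_gt_of_ne hjne with h | h
          · refine dIco ?_
            rw [← hstep j1]
            exact hsmono h
          · refine (dIco ?_).symm
            rw [← hstep j2]
            exact hsmono h
        · rw [hEu' i2 j2 h2]
          exact Set.disjoint_empty _
      · rw [hEu' i1 j1 h1]
        exact Set.empty_disjoint _
    · exact hUB i1 j1 i2 j2 hadj
    · exact (hUB i2 j2 i1 j1 (hadj.symm)).symm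
    · -- b-b
      have hBB : ∀ (j : Fin N) (i2 : Fin K), i2 ≠ i →
          Disjoint (E (.b i j)) (E (.b i2 j)) := by
        intro j i2 h2
        rw [hEb j, hEb' i2 j h2]
        have hD := pieceSet_disjoint_top (c1 := s (j : ℕ)) (c2 := s N - x (.u i j))
          (d := x (.b i j)) (α := alf i2 j) (β := alf i2 j + x (.b i2 j))
          (h12 j) (hx.1 (SwitchVertex.u i j))
        rw [show (s N - x (.u i j)) + x (.u i j) = s N by ring] at hD
        exact hD.symm
      by_cases h1 : i1 = i
      · subst h1
        by_cases h2 : i2 = i1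
        · exfalso
          subst h2
          rcases hadj.2 with hout | ⟨-, hnb⟩
          · have hj : j1 = j2 := hout
            exact hadj.1 (by rw [hj])
          · exact hnb ⟨trivial, trivial⟩
        · have hj : j1 = j2 := by
            rcases hadj.2 with hout | ⟨hinp, -⟩
            · exact hout
            · exact absurd (hinp : i1 = i2).symm h2
          subst hj
          exact hBB j1 i2 h2
      · by_cases h2 : i2 = i
        · subst h2
          have hj : j1 = j2 := by
            rcases hadj.2 with hout | ⟨hinp, -⟩
            · exact hout
            · exact absurd (hinp : i1 = i2) h1
          subst hj
          exact (hBB j1 i1 h1).symm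
        · have hj : j1 = j2 := by
            rcases hadj.2 with hout | ⟨hinp, hnb⟩
            · exact hout
            · exact absurd ⟨trivial, trivial⟩ hnb
          subst hj
          have hine : i1 ≠ i2 := by
            intro h
            exact hadj.1 (by rw [h])
          rw [hEb' i1 j1 h1, hEb' i2 j1 h2]
          rcases lt_or_gt_of_ne hine with h | h
          · exact pieceSet_disjoint_pieceSet (h12 j1) (hx.1 (SwitchVertex.u i j1))
              (hx.1 (SwitchVertex.b i j1)) (hamono i1 i2 j1 h h1)
          · exact (pieceSet_disjoint_pieceSet (h12 j1) (hx.1 (SwitchVertex.u i j1))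
              (hx.1 (SwitchVertex.b i j1)) (hamono i2 i1 j1 h h2)).symm
  · -- volume
    rintro (⟨i', j⟩ | ⟨i', j⟩)
    · by_cases h : i' = i
      · rw [h, hEu j, Real.volume_Ico]
        simp [h]
      · rw [hEu' i' j h]
        simp [h]
    · by_cases h : i' = i
      · rw [h, hEb j, Real.volume_Ico]
        simp
      · rw [hEb' i' j h, pieceSet_volume (h12 j) (by linarith [hx.1 (SwitchVertex.b i' j)])
          (hx.1 (SwitchVertex.u i j)) (hx.1 (SwitchVertex.b i j))]
        simp
  · -- nonnegativity
    rintro (⟨i', j⟩ | ⟨i', j⟩)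
    · dsimp only
      split_ifs
      · exact hx.1 _
      · exact le_rfl
    · exact hx.1 _

end Broadcast

section Final

lemma qstab_subset_smul {K N : ℕ} (hK : 0 < K) :
    qstab (GKN K N) ⊆ ((2 * (K:ℝ) - 1) / K) • stabPolytope (GKN K N) := by
  intro x hx
  have hKpos : (0:ℝ) < K := by exact_mod_cast hK
  have hK1 : (1:ℝ) ≤ K := by exact_mod_cast hK
  have hcpos : (0:ℝ) < 2 * K - 1 := by linarith
  have htpos : (0:ℝ) < (2 * (K:ℝ) - 1) / K := div_pos hcpos hKpos
  refine Set.mem_smul_set.2 ⟨((2 * (K:ℝ) - 1) / K)⁻¹ • x, ?_,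
    smul_inv_smul₀ (ne_of_gt htpos) x⟩
  set zU : SwitchVertex K N → ℝ := fun v => match v with
    | .u i j => x (.u i j)
    | .b _ _ => 0 with hzU
  set zB : Fin K → SwitchVertex K N → ℝ := fun i v => match v with
    | .u i' j => if i' = i then x (.u i' j) else 0
    | .b i' j => x (.b i' j) with hzB
  set w : Option (Fin K) → ℝ :=
    fun o => Option.elim o (((K:ℝ) - 1) / (2 * K - 1)) (fun _ => 1 / (2 * K - 1)) with hw
  set p : Option (Fin K) → SwitchVertex K N → ℝ :=
    fun o => Option.elim o zU zB with hp
  have hwsum : ∑ o : Option (Fin K), w o = 1 := by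
    rw [Fintype.sum_option]
    simp only [hw, Option.elim]
    rw [Finset.sum_const, Finset.card_univ, Fintype.card_fin]
    rw [nsmul_eq_mul, mul_one_div, ← add_div, div_eq_one_iff_eq hcpos.ne']
    ring
  have hmem : (∑ o : Option (Fin K), w o • p o) ∈ stabPolytope (GKN K N) := by
    refine (convex_convexHull ℝ _).sum_mem ?_ hwsum ?_
    · rintro (_ | i) -
      · simp only [hw, Option.elim]
        exact div_nonneg (by linarith) (by linarith)
      · simp only [hw, Option.elim]
        exact div_nonneg (by linarith) (by linarith)
    · rintro (_ | i) -
      · exact unicast_mem hx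
      · exact broadcast_mem hx i
  have hdecomp : ((2 * (K:ℝ) - 1) / K)⁻¹ • x = ∑ o : Option (Fin K), w o • p o := by
    funext v
    rw [Fintype.sum_option]
    simp only [Finset.sum_apply, Pi.add_apply, Pi.smul_apply, smul_eq_mul, hw, hp,
      Option.elim]
    rw [inv_div]
    match v with
    | .u i0 j =>
      have hsum : ∑ i : Fin K, 1 / (2 * (K:ℝ) - 1) *
          (zB i (SwitchVertex.u i0 j)) = 1 / (2 * (K:ℝ) - 1) * x (.u i0 j) := by
        have : ∀ i : Fin K, 1 / (2 * (K:ℝ) - 1) * (zB i (SwitchVertex.u i0 j))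
            = if i0 = i then 1 / (2 * (K:ℝ) - 1) * x (.u i0 j) else 0 := by
          intro i
          simp only [hzB]
          by_cases h : i0 = i <;> simp [h]
        rw [Finset.sum_congr rfl (fun i _ => this i)]
        rw [Finset.sum_ite_eq Finset.univ i0 (fun _ => 1 / (2 * (K:ℝ) - 1) * x (.u i0 j))]
        simp
      rw [hsum]
      show (K:ℝ) / (2 * K - 1) * x (.u i0 j)
          = ((K:ℝ) - 1) / (2 * K - 1) * zU (.u i0 j) + 1 / (2 * (K:ℝ) - 1) * x (.u i0 j)
      have hz : zU (.u i0 j) = x (.u i0 j) := rfl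
      rw [hz]
      field_simp
      ring
    | .b i0 j =>
      have hsum : ∑ i : Fin K, 1 / (2 * (K:ℝ) - 1) * (zB i (SwitchVertex.b i0 j))
          = (K:ℝ) / (2 * K - 1) * x (.b i0 j) := by
        have : ∀ i : Fin K, 1 / (2 * (K:ℝ) - 1) * (zB i (SwitchVertex.b i0 j))
            = 1 / (2 * (K:ℝ) - 1) * x (.b i0 j) := fun i => rfl
        rw [Finset.sum_congr rfl (fun i _ => this i), Finset.sum_const,
          Finset.card_univ, Fintype.card_fin, nsmul_eq_mul]
        field_simp
      rw [hsum]
      show (K:ℝ) / (2 * K - 1) * x (.b i0 j)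
          = ((K:ℝ) - 1) / (2 * K - 1) * zU (.b i0 j) + (K:ℝ) / (2 * K - 1) * x (.b i0 j)
      have hz : zU (.b i0 j) = 0 := rfl
      rw [hz]
      ring
  rw [hdecomp]
  exact hmem

end Final

end SwitchAux

/-- For the enhanced conflict graph of a `K × N` switch with unicasts and
broadcasts only, the imperfection ratio is at most `(2K - 1) / K`. -/
theorem stmt11 (K N : ℕ) (hK : 0 < K) :
    impRatio (GKN K N) ≤ (2 * (K : ℝ) - 1) / K := by
  have hmem : ((2 * (K : ℝ) - 1) / K) ∈
      {t : ℝ | qstab (GKN K N) ⊆ t • stabPolytope (GKN K N)} :=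
    SwitchAux.qstab_subset_smul hK
  rw [impRatio]
  by_cases hb : BddBelow {t : ℝ | qstab (GKN K N) ⊆ t • stabPolytope (GKN K N)}
  · exact csInf_le hb hmem
  · rw [Real.sInf_of_not_bddBelow hb]
    have hK1 : (1:ℝ) ≤ K := by exact_mod_cast hK
    apply div_nonneg <;> linarith
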